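/- Let p be a prime and c > 2 an integer. Then the limit as n → ∞ of #V(p^n, 0)/p^{(2c−1)n} exists and equals (1 − p^{−c})/(1 − p^{−(c−1)}), where V(p^n, 0) = {(x,y) ∈ ((ℤ/p^nℤ)^c)^2 : x·y ≡ 0 (mod p^n)}. -/

import Mathlib

open Filter

/-- The number of pairs `(x, y)` of vectors in `((ℤ/mℤ)^c)^2` whose dot product is
the residue of `ℓ` modulo `m`. -/
noncomputable def Vcard (c m : ℕ) (ℓ : ℤ) : ℕ :=
  Nat.card {xy : (Fin c → ZMod m) × (Fin c → ZMod m) //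
    (∑ i, xy.1 i * xy.2 i) = (ℓ : ZMod m)}

open Finset

variable {p n k : ℕ}

-- atom 1: card of divisible elements
lemma val_dvd_card (hp : p.Prime) (hk : k ≤ n) :
    Nat.card {z : ZMod (p ^ n) // p ^ k ∣ z.val} = p ^ (n - k) := by
  haveI : NeZero (p ^ n) := ⟨pow_ne_zero n hp.ne_zero⟩
  have hpk : 0 < p ^ k := pow_pos hp.pos k
  have hsplit : p ^ n = p ^ (n - k) * p ^ k := by
    rw [← pow_add]; congr 1; omega
  have e : {z : ZMod (p ^ n) // p ^ k ∣ z.val} ≃ Fin (p ^ (n - k)) := by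
    refine ⟨fun z => ⟨z.1.val / p ^ k, ?_⟩, fun i => ⟨((i.1 * p ^ k : ℕ) : ZMod (p ^ n)), ?_⟩, ?_, ?_⟩
    · have h2 : z.1.val < p ^ (n - k) * p ^ k := lt_of_lt_of_eq z.1.val_lt hsplit
      exact Nat.div_lt_of_lt_mul (by rwa [mul_comm] at h2)
    · have hlt : i.1 * p ^ k < p ^ n := by
        rw [hsplit]; exact (Nat.mul_lt_mul_right hpk).mpr i.2
      rw [ZMod.val_natCast_of_lt hlt]
      exact Dvd.intro _ (mul_comm _ _)
    · rintro ⟨z, hz⟩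
      ext
      simp only
      rw [Nat.div_mul_cancel hz, ZMod.natCast_val, ZMod.cast_id]
    · rintro ⟨i, hi⟩
      ext
      simp only
      have hlt : i * p ^ k < p ^ n := by
        rw [hsplit]; exact (Nat.mul_lt_mul_right hpk).mpr hi
      rw [ZMod.val_natCast_of_lt hlt, Nat.mul_div_cancel _ hpk]
  rw [Nat.card_congr e, Nat.card_eq_fintype_card, Fintype.card_fin]

-- atom 2: ring dvd iff val dvd
lemma dvd_iff_val (hp : p.Prime) (hk : k ≤ n) (z : ZMod (p ^ n)) :
    ((p : ZMod (p ^ n)) ^ k ∣ z) ↔ p ^ k ∣ z.val := by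
  haveI : NeZero (p ^ n) := ⟨pow_ne_zero n hp.ne_zero⟩
  constructor
  · rintro ⟨a, rfl⟩
    have : ((p : ZMod (p ^ n)) ^ k * a) = ((p ^ k * a.val : ℕ) : ZMod (p ^ n)) := by
      push_cast [ZMod.natCast_val, ZMod.cast_id]
      ring
    rw [this, ZMod.val_natCast]
    exact (Nat.dvd_mod_iff (pow_dvd_pow p hk)).mpr ⟨a.val, rfl⟩
  · rintro ⟨t, ht⟩
    refine ⟨(t : ZMod (p ^ n)), ?_⟩
    have : z = ((z.val : ℕ) : ZMod (p ^ n)) := by rw [ZMod.natCast_val, ZMod.cast_id]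
    rw [this, ht]
    push_cast
    ring

-- dvd-version of atom 1
lemma dvd_card (hp : p.Prime) (hk : k ≤ n) :
    Nat.card {z : ZMod (p ^ n) // (p : ZMod (p ^ n)) ^ k ∣ z} = p ^ (n - k) := by
  rw [Nat.card_congr (Equiv.subtypeEquivRight fun z => dvd_iff_val hp hk z)]
  exact val_dvd_card hp hk

lemma fiber (hp : p.Prime) {c : ℕ} (hc : 0 < c) (x : Fin c → ZMod (p ^ n)) (w : ℕ) (hw : w ≤ n)
    (hdvd : ∀ i, p ^ w ∣ (x i).val)
    (hmax : w = n ∨ ∃ j, ¬ p ^ (w + 1) ∣ (x j).val) :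
    Nat.card {y : Fin c → ZMod (p ^ n) // ∑ i, x i * y i = 0} = p ^ ((c - 1) * n + w) := by
  haveI : NeZero (p ^ n) := ⟨pow_ne_zero n hp.ne_zero⟩
  obtain ⟨c', rfl⟩ : ∃ c', c = c' + 1 := ⟨c - 1, by omega⟩
  rcases hmax with hwn | ⟨j, hj⟩
  · -- x = 0 case
    subst hwn
    have hx : ∀ i, x i = 0 := by
      intro i
      have h3 : (x i).val = 0 := Nat.eq_zero_of_dvd_of_lt (hdvd i) (x i).val_lt
      exact (ZMod.val_eq_zero _).mp h3
    have htriv : ∀ y : Fin (c' + 1) → ZMod (p ^ w), ∑ i, x i * y i = 0 := by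
      intro y; simp [hx]
    rw [Nat.card_congr (Equiv.subtypeUnivEquiv htriv), Nat.card_fun, Nat.card_zmod,
      Nat.card_eq_fintype_card, Fintype.card_fin, ← pow_mul]
    congr 1
    simp only [Nat.add_sub_cancel]
    ring
  · -- unit case
    have hwlt : w < n := by
      rcases Nat.lt_or_ge w n with h | h
      · exact h
      · exfalso
        have h1 : (x j).val < p ^ n := (x j).val_lt
        have h2 : (x j).val = 0 := Nat.eq_zero_of_dvd_of_lt
          (dvd_trans (pow_dvd_pow p h) (hdvd j)) h1
        exact hj (h2 ▸ dvd_zero _)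
    let f : (Fin (c' + 1) → ZMod (p ^ n)) →+ ZMod (p ^ n) :=
      { toFun := fun y => ∑ i, x i * y i
        map_zero' := by simp
        map_add' := by intro a b; simp [mul_add, Finset.sum_add_distrib] }
    have hker : Nat.card {y : Fin (c' + 1) → ZMod (p ^ n) // ∑ i, x i * y i = 0}
        = Nat.card f.ker := by
      exact Nat.card_congr (Equiv.subtypeEquivRight fun y => Iff.symm AddMonoidHom.mem_ker)
    have hmem : ∀ b : ZMod (p ^ n), b ∈ f.range ↔ (p : ZMod (p ^ n)) ^ w ∣ b := by
      intro b
      constructor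
      · rintro ⟨y, rfl⟩
        show (p : ZMod (p ^ n)) ^ w ∣ ∑ i, x i * y i
        exact Finset.dvd_sum fun i _ => Dvd.dvd.mul_right ((dvd_iff_val hp hw (x i)).mpr (hdvd i)) _
      · rintro ⟨a, rfl⟩
        obtain ⟨m, hm⟩ := hdvd j
        have hpm : ¬ p ∣ m := by
          intro hd
          obtain ⟨t, rfl⟩ := hd
          exact hj ⟨t, by rw [hm, pow_succ]; ring⟩
        have hcop : Nat.Coprime m (p ^ n) :=
          Nat.Coprime.pow_right _ ((hp.coprime_iff_not_dvd.mpr hpm).symm)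
        have hunit : IsUnit (m : ZMod (p ^ n)) := (ZMod.isUnit_iff_coprime m (p ^ n)).mpr hcop
        obtain ⟨u, hu⟩ := hunit
        refine ⟨fun i => if i = j then (↑u⁻¹ * a) else 0, ?_⟩
        have hxj : x j = (p : ZMod (p ^ n)) ^ w * (m : ZMod (p ^ n)) := by
          have hv : x j = (((x j).val : ℕ) : ZMod (p ^ n)) := by
            rw [ZMod.natCast_val, ZMod.cast_id]
          rw [hv, hm]; push_cast; ring
        show ∑ i, x i * _ = _
        rw [Finset.sum_eq_single j]
        · rw [if_pos rfl, hxj, ← hu]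
          calc (p : ZMod (p ^ n)) ^ w * ↑u * (↑u⁻¹ * a)
              = (p : ZMod (p ^ n)) ^ w * (↑u * ↑u⁻¹) * a := by ring
            _ = (p : ZMod (p ^ n)) ^ w * a := by rw [Units.mul_inv, mul_one]
        · intro i _ hij; rw [if_neg hij, mul_zero]
        · intro h; exact absurd (Finset.mem_univ j) h
    have hcardrange : Nat.card f.range = p ^ (n - w) :=
      (Nat.card_congr (Equiv.subtypeEquivRight hmem)).trans (dvd_card hp hw)
    have hdom : Nat.card (Fin (c' + 1) → ZMod (p ^ n)) = p ^ (n * (c' + 1)) := by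
      rw [Nat.card_fun, Nat.card_zmod, Nat.card_eq_fintype_card, Fintype.card_fin, ← pow_mul]
    have hiso : Nat.card ((Fin (c' + 1) → ZMod (p ^ n)) ⧸ f.ker) = Nat.card f.range :=
      Nat.card_congr (QuotientAddGroup.quotientKerEquivRange f).toEquiv
    have hsplit := AddSubgroup.card_eq_card_quotient_mul_card_addSubgroup f.ker
    rw [hdom, hiso, hcardrange] at hsplit
    rw [hker]
    have hexp : n * (c' + 1) = (n - w) + ((c' + 1 - 1) * n + w) := by
      simp only [Nat.add_sub_cancel]
      zify [hw]
      ring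
    rw [hexp, pow_add] at hsplit
    exact (Nat.eq_of_mul_eq_mul_left (pow_pos hp.pos _) hsplit).symm

open Finset in
noncomputable def wf (p n : ℕ) {c : ℕ} (x : Fin c → ZMod (p ^ n)) : ℕ :=
  padicValNat p (Nat.gcd (p ^ n) (Finset.univ.gcd fun i => (x i).val))

lemma wf_spec (hp : p.Prime) {c : ℕ} (x : Fin c → ZMod (p ^ n)) :
    wf p n x ≤ n ∧ (∀ i, p ^ (wf p n x) ∣ (x i).val) ∧
      (wf p n x = n ∨ ∃ j, ¬ p ^ (wf p n x + 1) ∣ (x j).val) := by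
  haveI : Fact p.Prime := ⟨hp⟩
  set g := Nat.gcd (p ^ n) (Finset.univ.gcd fun i => (x i).val) with hg
  have hgdvd : g ∣ p ^ n := Nat.gcd_dvd_left _ _
  obtain ⟨m, hm, hgm⟩ := (Nat.dvd_prime_pow hp).mp hgdvd
  have hwm : wf p n x = m := by rw [wf, ← hg, hgm, padicValNat.prime_pow]
  rw [hwm]
  refine ⟨hm, ?_, ?_⟩
  · intro i
    calc p ^ m = g := hgm.symm
    _ ∣ Finset.univ.gcd fun i => (x i).val := Nat.gcd_dvd_right _ _
    _ ∣ (x i).val := Finset.gcd_dvd (Finset.mem_univ i)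
  · rcases eq_or_lt_of_le hm with h | h
    · exact Or.inl h
    · refine Or.inr ?_
      by_contra hcon
      push_neg at hcon
      have h1 : p ^ (m + 1) ∣ Finset.univ.gcd fun i => (x i).val :=
        Finset.dvd_gcd fun i _ => hcon i
      have h2 : p ^ (m + 1) ∣ p ^ n := pow_dvd_pow p h
      have h3 : p ^ (m + 1) ∣ g := Nat.dvd_gcd h2 h1
      rw [hgm] at h3
      have hle := Nat.le_of_dvd (pow_pos hp.pos m) h3
      have hlt : p ^ m < p ^ (m + 1) := Nat.pow_lt_pow_right hp.one_lt (by omega)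
      omega

lemma nat_card_sigma {α : Type*} [Fintype α] {β : α → Type*} [∀ a, Finite (β a)] :
    Nat.card (Σ a, β a) = ∑ a, Nat.card (β a) := by
  letI : ∀ a, Fintype (β a) := fun a => Fintype.ofFinite _
  simp [Nat.card_eq_fintype_card]

lemma formula (hp : p.Prime) {c : ℕ} (hc : 0 < c) (n : ℕ) [NeZero (p ^ n)] :
    Vcard c (p ^ n) 0 = ∑ x : Fin c → ZMod (p ^ n), p ^ ((c - 1) * n + wf p n x) := by
  rw [Vcard]
  have h0 : ((0 : ℤ) : ZMod (p ^ n)) = 0 := Int.cast_zero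
  rw [Nat.card_congr (Equiv.subtypeEquivRight (fun xy => by rw [h0]))]
  rw [Nat.card_congr (Equiv.subtypeProdEquivSigmaSubtype
    (fun (x y : Fin c → ZMod (p ^ n)) => ∑ i, x i * y i = 0))]
  rw [nat_card_sigma]
  refine Finset.sum_congr rfl fun x _ => ?_
  obtain ⟨h1, h2, h3⟩ := wf_spec hp x
  exact fiber hp hc x _ h1 h2 h3

open Finset in
lemma pointwise (hp : p.Prime) {c : ℕ} (x : Fin c → ZMod (p ^ n)) :
    ((p : ℝ) ^ (wf p n x)) = 1 + ∑ k ∈ Finset.range n,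
      (if ∀ i, p ^ (k + 1) ∣ (x i).val then ((p : ℝ) ^ (k + 1) - (p : ℝ) ^ k) else 0) := by
  obtain ⟨hw, h2, h3⟩ := wf_spec hp x
  set w := wf p n x with hwdef
  have hcond : ∀ k, k ∈ Finset.range n → ((∀ i, p ^ (k + 1) ∣ (x i).val) ↔ k < w) := by
    intro k hk
    rw [Finset.mem_range] at hk
    constructor
    · intro hD
      rcases h3 with h | ⟨j, hj⟩
      · omega
      · by_contra hkw
        push_neg at hkw
        exact hj (dvd_trans (pow_dvd_pow p (by omega)) (hD j))
    · intro hkw i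
      exact dvd_trans (pow_dvd_pow p (by omega)) (h2 i)
  have step1 : ∀ k ∈ Finset.range n,
      (if ∀ i, p ^ (k + 1) ∣ (x i).val then ((p : ℝ) ^ (k + 1) - (p : ℝ) ^ k) else 0)
      = (if k < w then ((p : ℝ) ^ (k + 1) - (p : ℝ) ^ k) else 0) := by
    intro k hk
    exact if_congr (hcond k hk) rfl rfl
  rw [Finset.sum_congr rfl step1]
  have step2 : ∑ k ∈ Finset.range n, (if k < w then ((p : ℝ) ^ (k + 1) - (p : ℝ) ^ k) else 0)
      = ∑ k ∈ Finset.range w, ((p : ℝ) ^ (k + 1) - (p : ℝ) ^ k) := by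
    rw [← Finset.sum_subset (Finset.range_subset_range.mpr hw)]
    · apply Finset.sum_congr rfl
      intro k hk
      rw [Finset.mem_range] at hk
      rw [if_pos hk]
    · intro k _ hk
      rw [Finset.mem_range] at hk
      rw [if_neg (by omega)]
  rw [step2, Finset.sum_range_sub (fun k => (p : ℝ) ^ k)]
  ring

lemma Dcount (hp : p.Prime) {c : ℕ} (hk : k ≤ n) [NeZero (p ^ n)] :
    (Finset.univ.filter fun x : Fin c → ZMod (p ^ n) => ∀ i, p ^ k ∣ (x i).val).card
      = p ^ ((n - k) * c) := by
  rw [← Fintype.card_subtype, ← Nat.card_eq_fintype_card]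
  rw [Nat.card_congr (Equiv.subtypePiEquivPi (p := fun (_ : Fin c) (z : ZMod (p ^ n)) => p ^ k ∣ z.val))]
  rw [Nat.card_pi]
  simp only [val_dvd_card hp hk]
  rw [Finset.prod_const, Finset.card_univ, Fintype.card_fin, ← pow_mul]

open Finset in
lemma sum_real (hp : p.Prime) {c : ℕ} (n : ℕ) [NeZero (p ^ n)] :
    ∑ x : Fin c → ZMod (p ^ n), ((p : ℝ) ^ (wf p n x))
      = (p : ℝ) ^ (n * c) + ∑ k ∈ Finset.range n,
        ((p : ℝ) ^ (k + 1) - (p : ℝ) ^ k) * (p : ℝ) ^ ((n - (k + 1)) * c) := by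
  rw [Finset.sum_congr rfl (fun x _ => pointwise hp x)]
  rw [Finset.sum_add_distrib]
  congr 1
  · rw [Finset.sum_const, Finset.card_univ]
    simp only [Fintype.card_fun, Fintype.card_fin, ZMod.card, nsmul_eq_mul, mul_one]
    push_cast
    rw [← pow_mul]
  · rw [Finset.sum_comm]
    apply Finset.sum_congr rfl
    intro k hk
    rw [Finset.mem_range] at hk
    rw [Finset.sum_ite, Finset.sum_const_zero, add_zero, Finset.sum_const]
    rw [Dcount hp (by omega : k + 1 ≤ n)]
    rw [nsmul_eq_mul, mul_comm]
    push_cast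
    ring

theorem stmt2 (p c : ℕ) (hp : p.Prime) (hc : 2 < c) :
    Tendsto (fun n : ℕ => (Vcard c (p ^ n) 0 : ℝ) / (p : ℝ) ^ ((2 * c - 1) * n))
      atTop
      (nhds ((1 - (p : ℝ) ^ (-(c : ℤ))) / (1 - (p : ℝ) ^ (-((c : ℤ) - 1))))) := by
  obtain ⟨a, rfl⟩ : ∃ a, c = a + 3 := ⟨c - 3, by omega⟩
  set P := (p : ℝ) with hPdef
  have hP1 : 1 < P := by rw [hPdef]; exact_mod_cast hp.one_lt
  have hP0 : 0 < P := by linarith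
  set r : ℝ := (P ^ (a + 2))⁻¹ with hr
  have hpow1 : 1 < P ^ (a + 2) := one_lt_pow₀ hP1 (by omega)
  have hr0 : 0 ≤ r := by positivity
  have hr1 : r < 1 := by rw [hr]; exact inv_lt_one_of_one_lt₀ hpow1
  have key : ∀ n : ℕ, (Vcard (a + 3) (p ^ n) 0 : ℝ) / P ^ ((2 * (a + 3) - 1) * n)
      = 1 + ((P - 1) * P⁻¹) * ∑ k ∈ Finset.range n, r ^ (k + 1) := by
    intro n
    haveI : NeZero (p ^ n) := ⟨pow_ne_zero n hp.ne_zero⟩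
    have h2 : ((Vcard (a + 3) (p ^ n) 0 : ℕ) : ℝ)
        = P ^ ((a + 2) * n) * ∑ x : Fin (a + 3) → ZMod (p ^ n), P ^ (wf p n x) := by
      rw [formula hp (by omega) n, Nat.cast_sum, Finset.mul_sum]
      apply Finset.sum_congr rfl
      intro x _
      rw [Nat.cast_pow, ← pow_add]
      congr 1
      all_goals omega
    rw [h2, sum_real hp n]
    rw [div_eq_iff (by positivity)]
    rw [mul_add]
    rw [show (1 + (P - 1) * P⁻¹ * ∑ k ∈ Finset.range n, r ^ (k + 1))
          * P ^ ((2 * (a + 3) - 1) * n)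
        = P ^ ((2 * (a + 3) - 1) * n) + ∑ k ∈ Finset.range n,
            r ^ (k + 1) * ((P - 1) * P⁻¹ * P ^ ((2 * (a + 3) - 1) * n)) from by
      rw [← Finset.sum_mul]; ring]
    congr 1
    · rw [← pow_add]
      congr 1
      have h5 : 2 * (a + 3) - 1 = 2 * a + 5 := by omega
      rw [h5]; ring
    · rw [Finset.mul_sum]
      apply Finset.sum_congr rfl
      intro k hk
      rw [Finset.mem_range] at hk
      obtain ⟨m, rfl⟩ : ∃ m, n = k + 1 + m := ⟨n - (k + 1), by omega⟩
      have e1 : (k + 1 + m) - (k + 1) = m := by omega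
      have e2 : 2 * (a + 3) - 1 = 2 * a + 5 := by omega
      rw [e1, e2, hr]
      have hPne : P ≠ 0 := ne_of_gt hP0
      have hQ0 : P ^ (a + 2) ≠ 0 := by positivity
      rw [← hPdef, inv_pow]
      field_simp
      ring
  have hgeom : Tendsto (fun n => ∑ k ∈ Finset.range n, r ^ k) atTop (nhds (1 - r)⁻¹) :=
    (hasSum_geometric_of_lt_one hr0 hr1).tendsto_sum_nat
  have hsum' : Tendsto (fun n => ∑ k ∈ Finset.range n, r ^ (k + 1)) atTop
      (nhds ((1 - r)⁻¹ * r)) := by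
    apply (hgeom.mul_const r).congr
    intro n
    rw [Finset.sum_mul]
    apply Finset.sum_congr rfl
    intros
    rw [pow_succ]
  have hfinal : Tendsto (fun n => 1 + ((P - 1) * P⁻¹) * ∑ k ∈ Finset.range n, r ^ (k + 1))
      atTop (nhds (1 + ((P - 1) * P⁻¹) * ((1 - r)⁻¹ * r))) :=
    (hsum'.const_mul _).const_add 1
  have hval : 1 + ((P - 1) * P⁻¹) * ((1 - r)⁻¹ * r)
      = (1 - P ^ (-((a + 3 : ℕ) : ℤ))) / (1 - P ^ (-(((a + 3 : ℕ) : ℤ) - 1))) := by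
    have hz1 : P ^ (-((a + 3 : ℕ) : ℤ)) = (P ^ (a + 3))⁻¹ := by
      rw [zpow_neg, zpow_natCast]
    have hz2 : P ^ (-(((a + 3 : ℕ) : ℤ) - 1)) = (P ^ (a + 2))⁻¹ := by
      rw [show -(((a + 3 : ℕ) : ℤ) - 1) = -((a + 2 : ℕ) : ℤ) by push_cast; ring,
        zpow_neg, zpow_natCast]
    rw [hz1, hz2, hr, show P ^ (a + 3) = P ^ (a + 2) * P from by rw [← pow_succ]]
    set Q := P ^ (a + 2) with hQdef
    have hQgt : 1 < Q := hpow1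
    have hQ0 : Q ≠ 0 := by intro h; rw [h] at hQgt; linarith
    have hQ2 : Q - 1 ≠ 0 := by intro h; nlinarith
    have hQ1 : (1 : ℝ) - Q⁻¹ ≠ 0 := by
      have h5 : Q⁻¹ < 1 := inv_lt_one_of_one_lt₀ hQgt
      intro h; rw [sub_eq_zero] at h; rw [← h] at h5; exact lt_irrefl _ h5
    have hPne : P ≠ 0 := ne_of_gt hP0
    rw [eq_div_iff hQ1]
    field_simp
    ring
  rw [← hval]
  exact Tendsto.congr (fun n => (key n).symm) hfinal
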